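/- Perturbation bound at labels other than t and y* (inequality (10) in the proof of Theorem 1): In the perturbation setup, for every label y ∉ {t, y*}: ℓ_L(p,y) = ℓ_L(q,y), and ℓ_H(p,y) − ℓ_H(q,y) = log(p t / (p t + ε)) > −ε / (p t). Consequently, for every α ∈ [0,1], ℓ_α(p,y) − ℓ_α(q,y) ≥ −ε·(1−α)/(p t), with strict inequality when α < 1. -/

import Mathlib

open Real

/-- The maximum of `p` over all labels different from `y`
(as a supremum, which for a finite nonempty label set equals the maximum). -/
noncomputable def maxNe {Y : Type*} (p : Y → ℝ) (y : Y) : ℝ :=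
  sSup {x : ℝ | ∃ y' : Y, y' ≠ y ∧ p y' = x}

/-- The multiclass hinge loss of a (strictly positive) distribution `p` at label `y`. -/
noncomputable def hingeLoss {Y : Type*} (p : Y → ℝ) (y : Y) : ℝ :=
  max 0 (1 - Real.log (p y / maxNe p y))

/-- The log loss of a (strictly positive) distribution `p` at label `y`. -/
noncomputable def logLoss {Y : Type*} (p : Y → ℝ) (y : Y) : ℝ :=
  - Real.log (p y)

/-- The hybrid loss with mixture parameter `α`. -/
noncomputable def hybridLoss {Y : Type*} (α : ℝ) (p : Y → ℝ) (y : Y) : ℝ :=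
  α * logLoss p y + (1 - α) * hingeLoss p y

/-- The conditional risk `L_α(p, D) = ∑ y, D y * ℓ_α(p, y)`. -/
noncomputable def condRisk {Y : Type*} [Fintype Y] (α : ℝ) (p D : Y → ℝ) : ℝ :=
  ∑ y, D y * hybridLoss α p y

/-- `D` is a distribution over `Y`. -/
def IsDist {Y : Type*} [Fintype Y] (D : Y → ℝ) : Prop :=
  (∀ y, 0 ≤ D y) ∧ ∑ y, D y = 1

/-- `p` is a strictly positive distribution over `Y`. -/
def IsPosDist {Y : Type*} [Fintype Y] (p : Y → ℝ) : Prop :=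
  (∀ y, 0 < p y) ∧ ∑ y, p y = 1

/-- Perturbation bound at labels other than t and y* (inequality (10)). -/
theorem perturbation_bound_other_labels {Y : Type*} [Fintype Y]
    (hcard : 1 < Fintype.card Y)
(p : Y → ℝ) (hp : IsPosDist p)
    (t ystar : Y) (hne : t ≠ ystar) (hpt : p t = p ystar)
    (hlt : ∀ y, y ≠ t → y ≠ ystar → p y < p t)
    (ε : ℝ) (hε0 : 0 < ε) (hεpt : ε < p t)
    (hεlt : ∀ y, y ≠ t → y ≠ ystar → p y < p t - ε)
    (q : Y → ℝ) (hqstar : q ystar = p ystar + ε) (hqt : q t = p t - ε)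
    (hq : ∀ y, y ≠ t → y ≠ ystar → q y = p y)
    (y : Y) (hyt : y ≠ t) (hystar : y ≠ ystar) :
    logLoss p y = logLoss q y ∧
    hingeLoss p y - hingeLoss q y = Real.log (p t / (p t + ε)) ∧
    -ε / p t < Real.log (p t / (p t + ε)) ∧
    ∀ α ∈ Set.Icc (0 : ℝ) 1,
      -(ε * (1 - α)) / p t ≤ hybridLoss α p y - hybridLoss α q y ∧
      (α < 1 → -(ε * (1 - α)) / p t < hybridLoss α p y - hybridLoss α q y) := by

  have hpt0 : 0 < p t := hp.1 t
  have hpy0 : 0 < p y := hp.1 y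
  have hqy : q y = p y := hq y hyt hystar
  have hub : ∀ y', y' ≠ y → p y' ≤ p t := by
    intro y' _
    by_cases h1 : y' = t
    · simp [h1]
    · by_cases h2 : y' = ystar
      · simp [h2, hpt]
      · exact (hlt y' h1 h2).le
  have hqub : ∀ y', y' ≠ y → q y' ≤ p t + ε := by
    intro y' hy'
    by_cases h1 : y' = t
    · rw [h1, hqt]; linarith
    · by_cases h2 : y' = ystar
      · rw [h2, hqstar, ← hpt]
      · rw [hq y' h1 h2]; have := hεlt y' h1 h2; linarith
  have hmaxp : maxNe p y = p t := by
    apply le_antisymm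
    · refine csSup_le ⟨p t, t, Ne.symm hyt, rfl⟩ ?_
      rintro x ⟨y', hy', rfl⟩
      exact hub y' hy'
    · refine le_csSup ⟨p t, ?_⟩ ⟨t, Ne.symm hyt, rfl⟩
      rintro x ⟨y', hy', rfl⟩
      exact hub y' hy'
  have hmaxq : maxNe q y = p t + ε := by
    apply le_antisymm
    · refine csSup_le ⟨q ystar, ystar, Ne.symm hystar, rfl⟩ ?_
      rintro x ⟨y', hy', rfl⟩
      exact hqub y' hy'
    · refine le_csSup ⟨p t + ε, ?_⟩ ⟨ystar, Ne.symm hystar, ?_⟩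
      · rintro x ⟨y', hy', rfl⟩
        exact hqub y' hy'
      · rw [hqstar, hpt]
  have hpte : (0:ℝ) < p t + ε := by linarith
  have hlog : logLoss p y = logLoss q y := by
    simp [logLoss, hqy]
  have hhp : hingeLoss p y = 1 - Real.log (p y / p t) := by
    unfold hingeLoss
    rw [hmaxp, max_eq_right]
    have hneg : Real.log (p y / p t) < 0 :=
      Real.log_neg (by positivity) ((div_lt_one hpt0).2 (hlt y hyt hystar))
    linarith
  have hhq : hingeLoss q y = 1 - Real.log (p y / (p t + ε)) := by
    unfold hingeLoss
    rw [hmaxq, hqy, max_eq_right]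
    have hlt1 : p y / (p t + ε) < 1 := (div_lt_one hpte).2 (by linarith [hlt y hyt hystar])
    have hneg : Real.log (p y / (p t + ε)) < 0 := Real.log_neg (by positivity) hlt1
    linarith
  have hhinge : hingeLoss p y - hingeLoss q y = Real.log (p t / (p t + ε)) := by
    rw [hhp, hhq, Real.log_div hpy0.ne' hpt0.ne', Real.log_div hpy0.ne' hpte.ne',
      Real.log_div hpt0.ne' hpte.ne']
    ring
  have hkey : -ε / p t < Real.log (p t / (p t + ε)) := by
    have h1 : Real.log (p t / (p t + ε)) = -Real.log ((p t + ε) / p t) := by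
      rw [Real.log_div hpt0.ne' hpte.ne', Real.log_div hpte.ne' hpt0.ne']; ring
    have h2 : Real.log ((p t + ε) / p t) < (p t + ε) / p t - 1 := by
      apply Real.log_lt_sub_one_of_pos (by positivity)
      intro h
      have := (div_eq_one_iff_eq hpt0.ne').1 h
      linarith
    have h3 : (p t + ε) / p t - 1 = ε / p t := by field_simp; ring
    rw [h1]
    rw [h3] at h2
    have : -(ε / p t) < -Real.log ((p t + ε) / p t) := by linarith
    linarith [this, (neg_div (p t) ε)]
  refine ⟨hlog, hhinge, hkey, ?_⟩
  intro α hα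
  obtain ⟨hα0, hα1⟩ := hα
  have hdiff : hybridLoss α p y - hybridLoss α q y = (1 - α) * Real.log (p t / (p t + ε)) := by
    unfold hybridLoss
    rw [← hlog]
    have : hingeLoss q y = hingeLoss p y - Real.log (p t / (p t + ε)) := by linarith
    rw [this]; ring
  have hlogneg : Real.log (p t / (p t + ε)) < 0 :=
    Real.log_neg (by positivity) ((div_lt_one hpte).2 (by linarith))
  have heq : -(ε * (1 - α)) / p t = (1 - α) * (-ε / p t) := by ring
  constructor
  · rw [hdiff, heq]
    exact mul_le_mul_of_nonneg_left hkey.le (by linarith)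
  · intro hαlt
    rw [hdiff, heq]
    exact mul_lt_mul_of_pos_left hkey (by linarith)
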